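/- arXiv:math/0202172 — 2 statements merged into one kernel-verified Lean document; each statement's English description precedes it below -/
import Mathlib

section
/- Let X be a connected, locally finite, infinite graph and F a subset of vertices such that X is self-similar with respect to F (no two vertices of F are adjacent in X, the closures of two distinct connected components of V(X)\F intersect in at most one vertex, and X is isomorphic to the reduced graph X_F). Then for any m-cell C (a connected component of V(X)\F^m) and any n-cell D with (m,n,C) ≠ (n,m,D), the intersection of the boundaries θC ∩ θD contains at most one vertex. -/
open SimpleGraph Set

variable {V : Type*}

/-- The vertex boundary of a set of vertices. -/
def vBdry (X : SimpleGraph V) (C : Set V) : Set V :=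
  {v | v ∉ C ∧ ∃ c ∈ C, X.Adj v c}

/-- The closure of a set of vertices. -/
def vClosure (X : SimpleGraph V) (C : Set V) : Set V :=
  C ∪ vBdry X C

/-- `C` is a connected component of `V X \ F`. -/
def IsCell (X : SimpleGraph V) (F : Set V) (C : Set V) : Prop :=
  ∃ v : ↥(Fᶜ), C = Subtype.val '' ((X.induce Fᶜ).connectedComponentMk v).supp

/-- The reduced graph `X_F` on vertex set `F`. -/
def reducedGraph (X : SimpleGraph V) (F : Set V) : SimpleGraph F where
  Adj x y := x ≠ y ∧ ∃ C, IsCell X F C ∧ (x : V) ∈ vBdry X C ∧ (y : V) ∈ vBdry X C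
  symm := ⟨fun x y ⟨h, C, hC, hx, hy⟩ => ⟨h.symm, C, hC, hy, hx⟩⟩
  loopless := ⟨fun x h => h.1 rfl⟩

/-- Self-similarity of `X` with respect to `F` and the isomorphism `ψ : X → X_F`:
axioms (F1) and (F2); axiom (F3) is the existence of `ψ` itself. -/
structure IsSelfSimilar (X : SimpleGraph V) (F : Set V) (ψ : X ≃g reducedGraph X F) : Prop where
  f1 : ∀ x ∈ F, ∀ y ∈ F, ¬ X.Adj x y
  f2 : ∀ C D, IsCell X F C → IsCell X F D → C ≠ D →
    (vClosure X C ∩ vClosure X D).Subsingleton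

/-- The self-similarity map `ψ` viewed as a self-map of the vertex set. -/
def psiMap (X : SimpleGraph V) (F : Set V) (ψ : X ≃g reducedGraph X F) : V → V :=
  fun v => ((ψ v : F) : V)

/-- `F^n = ψ^n F` (with `F^0 = V X`). -/
def Fiter (X : SimpleGraph V) (F : Set V) (ψ : X ≃g reducedGraph X F) (n : ℕ) : Set V :=
  Set.range ((psiMap X F ψ)^[n])

/-- Reachability within the complement of `B`. -/
def ReachIn (X : SimpleGraph V) (B : Set V) (x y : V) : Prop :=
  ∃ w : X.Walk x y, ∀ v ∈ w.support, v ∉ B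

namespace ReachIn

variable {X : SimpleGraph V} {B B' : Set V} {x y z : V}

lemma refl (hx : x ∉ B) : ReachIn X B x x :=
  ⟨Walk.nil, by simpa using hx⟩

lemma symm (h : ReachIn X B x y) : ReachIn X B y x := by
  obtain ⟨w, hw⟩ := h
  exact ⟨w.reverse, fun v hv => hw v (by simpa [Walk.support_reverse] using hv)⟩

lemma trans (h : ReachIn X B x y) (h' : ReachIn X B y z) : ReachIn X B x z := by
  obtain ⟨w, hw⟩ := h; obtain ⟨w', hw'⟩ := h'
  refine ⟨w.append w', fun v hv => ?_⟩
  rw [Walk.mem_support_append_iff] at hv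
  exact hv.elim (hw v) (hw' v)

lemma adj (h : X.Adj x y) (hx : x ∉ B) (hy : y ∉ B) : ReachIn X B x y :=
  ⟨Walk.cons h Walk.nil, by simp [hx, hy]⟩

lemma left_notMem (h : ReachIn X B x y) : x ∉ B := by
  obtain ⟨w, hw⟩ := h; exact hw x w.start_mem_support

lemma right_notMem (h : ReachIn X B x y) : y ∉ B := by
  obtain ⟨w, hw⟩ := h; exact hw y w.end_mem_support

lemma mono (hB : B' ⊆ B) (h : ReachIn X B x y) : ReachIn X B' x y := by
  obtain ⟨w, hw⟩ := h; exact ⟨w, fun v hv hvB => hw v hv (hB hvB)⟩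

end ReachIn

section CellBasics

variable {X : SimpleGraph V} {B B' : Set V} {C D : Set V} {x y : V}

lemma reachIn_of_induce_reachable {u v : ↥Bᶜ}
    (h : (X.induce Bᶜ).Reachable u v) : ReachIn X B ↑u ↑v := by
  obtain ⟨w⟩ := h
  induction w with
  | @nil u => exact ReachIn.refl u.2
  | @cons u b c h p ih =>
    exact (ReachIn.adj (by simpa using h) u.2 b.2).trans ih

lemma induce_reachable_of_walk {x y : V} (w : X.Walk x y)
    (hw : ∀ v ∈ w.support, v ∉ B) (hx : x ∈ Bᶜ) (hy : y ∈ Bᶜ) :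
    (X.induce Bᶜ).Reachable ⟨x, hx⟩ ⟨y, hy⟩ := by
  induction w with
  | nil => rfl
  | @cons a b c h p ih =>
    have hb : b ∈ Bᶜ := hw b (by simp)
    have hadj : (X.induce Bᶜ).Adj ⟨a, hx⟩ ⟨b, hb⟩ := by simpa using h
    exact hadj.reachable.trans (ih (fun v hv => hw v (by simp [hv])) hb hy)

lemma induce_reachable_iff_reachIn {u v : ↥Bᶜ} :
    (X.induce Bᶜ).Reachable u v ↔ ReachIn X B ↑u ↑v := by
  refine ⟨reachIn_of_induce_reachable, fun ⟨w, hw⟩ => ?_⟩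
  have := induce_reachable_of_walk w hw u.2 v.2
  simpa using this

theorem IsCell.nonempty (hC : IsCell X B C) : C.Nonempty := by
  obtain ⟨v, rfl⟩ := hC
  exact ⟨v, v, by simp [ConnectedComponent.mem_supp_iff], rfl⟩

theorem IsCell.subset_compl (hC : IsCell X B C) : C ⊆ Bᶜ := by
  obtain ⟨v, rfl⟩ := hC
  rintro x ⟨u, _, rfl⟩; exact u.2

theorem IsCell.notMem (hC : IsCell X B C) (hx : x ∈ C) : x ∉ B :=
  hC.subset_compl hx

theorem IsCell.mem_iff (hC : IsCell X B C) (hx : x ∈ C) (hy : y ∉ B) :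
    ReachIn X B x y ↔ y ∈ C := by
  obtain ⟨v, rfl⟩ := hC
  obtain ⟨u, hu, rfl⟩ := hx
  rw [ConnectedComponent.mem_supp_iff, ConnectedComponent.eq] at hu
  constructor
  · intro h
    refine ⟨⟨y, hy⟩, ?_, rfl⟩
    rw [ConnectedComponent.mem_supp_iff, ConnectedComponent.eq]
    exact (induce_reachable_iff_reachIn.2 h).symm.trans hu
  · rintro ⟨u', hu', rfl⟩
    rw [ConnectedComponent.mem_supp_iff, ConnectedComponent.eq] at hu'
    exact induce_reachable_iff_reachIn.1 (hu.trans hu'.symm)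

theorem IsCell.mem_of_reachIn (hC : IsCell X B C) (hx : x ∈ C) (hy : y ∉ B)
    (h : ReachIn X B x y) : y ∈ C := (hC.mem_iff hx hy).1 h

theorem IsCell.reachIn (hC : IsCell X B C) (hx : x ∈ C) (hy : y ∈ C) :
    ReachIn X B x y := (hC.mem_iff hx (hC.notMem hy)).2 hy

theorem isCell_of_reachIn (hne : C.Nonempty) (hsub : C ⊆ Bᶜ)
    (hiff : ∀ x ∈ C, ∀ y, y ∉ B → (ReachIn X B x y ↔ y ∈ C)) :
    IsCell X B C := by
  obtain ⟨x, hx⟩ := hne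
  refine ⟨⟨x, hsub hx⟩, ?_⟩
  ext y
  constructor
  · intro hy
    refine ⟨⟨y, hsub hy⟩, ?_, rfl⟩
    rw [ConnectedComponent.mem_supp_iff, ConnectedComponent.eq]
    obtain ⟨w, hw⟩ := ((hiff x hx y (hsub hy)).2 hy).symm
    exact induce_reachable_of_walk w hw (hsub hy) (hsub hx)
  · rintro ⟨u, hu, rfl⟩
    rw [ConnectedComponent.mem_supp_iff, ConnectedComponent.eq] at hu
    exact (hiff x hx u u.2 ).1 (induce_reachable_iff_reachIn.1 hu.symm)

theorem exists_isCell (hx : x ∉ B) : ∃ C, IsCell X B C ∧ x ∈ C :=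
  ⟨_, ⟨⟨x, hx⟩, rfl⟩, ⟨x, hx⟩, by simp [ConnectedComponent.mem_supp_iff], rfl⟩

theorem IsCell.eq_of_mem (hC : IsCell X B C) (hD : IsCell X B D)
    (hxC : x ∈ C) (hxD : x ∈ D) : C = D := by
  ext y
  constructor
  · intro hy
    exact hD.mem_of_reachIn hxD (hC.notMem hy) (hC.reachIn hxC hy)
  · intro hy
    exact hC.mem_of_reachIn hxC (hD.notMem hy) (hD.reachIn hxD hy)

theorem IsCell.bdry_subset (hC : IsCell X B C) : vBdry X C ⊆ B := by
  rintro v ⟨hv, c, hc, hadj⟩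
  by_contra hvB
  exact hv (hC.mem_of_reachIn hc hvB (ReachIn.adj hadj.symm (hC.notMem hc) hvB))

theorem IsCell.support_subset (hC : IsCell X B C) (hx : x ∈ C)
    (w : X.Walk x y) (hw : ∀ v ∈ w.support, v ∉ B) : ∀ v ∈ w.support, v ∈ C := by
  induction w with
  | nil => intro v hv; rw [Walk.support_nil, List.mem_singleton] at hv; subst hv; exact hx
  | @cons a b c h p ih =>
    intro v hv
    rw [Walk.support_cons, List.mem_cons] at hv
    rcases hv with rfl | hv
    · exact hx
    · have hb : b ∈ C := hC.mem_of_reachIn hx (hw b (by simp))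
        (ReachIn.adj h (hC.notMem hx) (hw b (by simp)))
      exact ih hb (fun u hu => hw u (by simp [hu])) v hv

theorem walk_stay (E : Set V) (hx : x ∈ E) (w : X.Walk x y)
    (hw : ∀ v ∈ w.support, v ∉ vBdry X E) : ∀ v ∈ w.support, v ∈ E := by
  induction w with
  | nil => intro v hv; rw [Walk.support_nil, List.mem_singleton] at hv; subst hv; exact hx
  | @cons a b c h p ih =>
    intro v hv
    rw [Walk.support_cons, List.mem_cons] at hv
    rcases hv with rfl | hv
    · exact hx
    · have hb : b ∈ E := by
        by_contra hbE
        exact hw b (by simp) ⟨hbE, a, hx, h.symm⟩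
      exact ih hb (fun u hu => hw u (by simp [hu])) v hv

theorem exists_supercell (hC : IsCell X B C) (hB' : B' ⊆ B) :
    ∃ D, IsCell X B' D ∧ C ⊆ D := by
  obtain ⟨x, hx⟩ := hC.nonempty
  have hx' : x ∉ B' := fun h => hC.notMem hx (hB' h)
  obtain ⟨D, hD, hxD⟩ := exists_isCell (X := X) hx'
  refine ⟨D, hD, fun y hy => ?_⟩
  exact hD.mem_of_reachIn hxD (fun h => hC.notMem hy (hB' h))
    ((hC.reachIn hx hy).mono hB')

theorem vClosure_mono (h : C ⊆ D) : vClosure X C ⊆ vClosure X D := by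
  rintro v (hv | ⟨hv, c, hc, hadj⟩)
  · exact Or.inl (h hv)
  · by_cases hvD : v ∈ D
    · exact Or.inl hvD
    · exact Or.inr ⟨hvD, c, h hc, hadj⟩

end CellBasics

lemma reducedGraph_adj {X : SimpleGraph V} {F : Set V} {x y : ↥F} :
    (reducedGraph X F).Adj x y ↔
      x ≠ y ∧ ∃ C, IsCell X F C ∧ (x : V) ∈ vBdry X C ∧ (y : V) ∈ vBdry X C :=
  Iff.rfl

section Transport

variable {W : Type*} {X : SimpleGraph V} {Y : SimpleGraph W} {B C : Set V} {x y : V}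

lemma iso_symm_image_image (e : X ≃g Y) (S : Set V) : ⇑e.symm '' (⇑e '' S) = S := by
  rw [← image_comp]
  ext v; simp

lemma reachIn_map (e : X ≃g Y) (h : ReachIn X B x y) :
    ReachIn Y (⇑e '' B) (e x) (e y) := by
  obtain ⟨w, hw⟩ := h
  refine ⟨w.map e.toHom, fun v hv => ?_⟩
  rw [Walk.support_map, List.mem_map] at hv
  obtain ⟨u, hu, rfl⟩ := hv
  rintro ⟨u', hu', hu'e⟩
  have : u' = u := (EquivLike.injective e) hu'e
  exact hw u hu (this ▸ hu')

lemma isCell_map (e : X ≃g Y) (hC : IsCell X B C) : IsCell Y (⇑e '' B) (⇑e '' C) := by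
  refine isCell_of_reachIn (hC.nonempty.image _) ?_ ?_
  · rintro _ ⟨c, hc, rfl⟩ ⟨b, hb, hbe⟩
    exact hC.notMem hc ((EquivLike.injective e) hbe ▸ hb)
  · rintro _ ⟨c, hc, rfl⟩ y hy
    obtain ⟨y₀, rfl⟩ := (EquivLike.surjective e) y
    have hy₀ : y₀ ∉ B := fun h => hy ⟨y₀, h, rfl⟩
    constructor
    · intro h
      have h2 := reachIn_map e.symm h
      rw [iso_symm_image_image] at h2
      simp only [RelIso.symm_apply_apply] at h2
      exact ⟨y₀, hC.mem_of_reachIn hc hy₀ h2, rfl⟩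
    · rintro ⟨y₁, hy₁, hy₁e⟩
      have : y₁ = y₀ := (EquivLike.injective e) hy₁e
      subst this
      exact reachIn_map e (hC.reachIn hc hy₁)

lemma vBdry_map (e : X ≃g Y) (C : Set V) : vBdry Y (⇑e '' C) = ⇑e '' vBdry X C := by
  ext v
  obtain ⟨v₀, rfl⟩ := (EquivLike.surjective e) v
  simp only [vBdry, mem_setOf_eq, mem_image]
  constructor
  · rintro ⟨hv, _, ⟨c, hc, rfl⟩, hadj⟩
    exact ⟨v₀, ⟨fun h => hv ⟨v₀, h, rfl⟩, c, hc, e.map_rel_iff.1 hadj⟩, rfl⟩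
  · rintro ⟨u, ⟨hu, c, hc, hadj⟩, hue⟩
    obtain rfl : u = v₀ := (EquivLike.injective e) hue
    exact ⟨fun ⟨b, hb, hbe⟩ => hu ((EquivLike.injective e) hbe ▸ hb),
      e c, ⟨c, hc, rfl⟩, e.map_rel_iff.2 hadj⟩

end Transport

section Psi

variable {X : SimpleGraph V} {F : Set V} {ψ : X ≃g reducedGraph X F}

lemma psiMap_injective : Function.Injective (psiMap X F ψ) := fun a b h =>
  ψ.toEquiv.injective (Subtype.ext h)

lemma psiMap_mem_F (v : V) : psiMap X F ψ v ∈ F := (ψ v).2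

lemma Fiter_zero : Fiter X F ψ 0 = univ := by simp [Fiter]

lemma Fiter_succ (n : ℕ) : Fiter X F ψ (n + 1) = psiMap X F ψ '' Fiter X F ψ n := by
  rw [Fiter, Fiter, Function.iterate_succ', Function.comp_def]
  ext x; simp [Set.range, Set.mem_image]

lemma Fiter_succ_subset (n : ℕ) : Fiter X F ψ (n + 1) ⊆ Fiter X F ψ n := by
  rintro x ⟨v, rfl⟩
  exact ⟨psiMap X F ψ v, (Function.iterate_succ_apply _ _ _).symm⟩

lemma Fiter_le {m n : ℕ} (h : m ≤ n) : Fiter X F ψ n ⊆ Fiter X F ψ m := by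
  induction n with
  | zero => obtain rfl := Nat.le_zero.1 h; exact subset_rfl
  | succ k ih =>
    rcases Nat.lt_or_ge m (k+1) with h' | h'
    · exact (Fiter_succ_subset k).trans (ih (Nat.lt_succ_iff.1 h'))
    · obtain rfl : m = k + 1 := le_antisymm h h'
      exact subset_rfl

lemma Fiter_one : Fiter X F ψ 1 = F := by
  rw [show (1:ℕ) = 0 + 1 from rfl, Fiter_succ, Fiter_zero, image_univ]
  ext x
  constructor
  · rintro ⟨v, rfl⟩; exact psiMap_mem_F v
  · intro hx
    refine ⟨ψ.symm ⟨x, hx⟩, ?_⟩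
    show ↑(ψ (ψ.symm ⟨x, hx⟩)) = x
    rw [RelIso.apply_symm_apply]

lemma Fiter_subset_F {m : ℕ} (hm : 1 ≤ m) : Fiter X F ψ m ⊆ F := by
  have := Fiter_le (X := X) (F := F) (ψ := ψ) hm
  rwa [Fiter_one] at this

/-- Lemma S: the boundary of a 1-cell meets `F²` in at most one point. -/
lemma bdry_inter_F2_subsingleton (hss : IsSelfSimilar X F ψ) {E : Set V}
    (hE : IsCell X F E) : (vBdry X E ∩ Fiter X F ψ 2).Subsingleton := by
  rintro x ⟨hxE, hx2⟩ y ⟨hyE, hy2⟩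
  by_contra hne
  rw [show (2:ℕ) = 1 + 1 from rfl, Fiter_succ, Fiter_one] at hx2 hy2
  obtain ⟨a, _ha, rfl⟩ := hx2
  obtain ⟨b, hb, rfl⟩ := hy2
  have hab : a ≠ b := fun h => hne (by rw [h])
  have hadj : (reducedGraph X F).Adj (ψ a) (ψ b) :=
    reducedGraph_adj.2 ⟨fun h => hab (ψ.toEquiv.injective h), E, hE, hxE, hyE⟩
  exact hss.f1 _ _ha _ hb (ψ.map_rel_iff.1 hadj)

end Psi

section Bridge

variable {X : SimpleGraph V} {F : Set V} {ψ : X ≃g reducedGraph X F}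

lemma one_cell_subset {B D E : Set V} (hB : B ⊆ F) (hD : IsCell X B D)
    (hE : IsCell X F E) {d : V} (hdD : d ∈ D) (hdE : d ∈ E) : E ⊆ D := fun e he =>
  hD.mem_of_reachIn hdD (fun hB' => hE.notMem he (hB hB')) ((hE.reachIn hdE he).mono hB)

/-- Lifting a walk in `X` whose support lies in `D` and which ends in `F`
to a walk in the reduced graph. -/
lemma walk_lift (hss : IsSelfSimilar X F ψ) {D : Set V} :
    ∀ {a y : V} (w : X.Walk a y) (hy : y ∈ F), (∀ v ∈ w.support, v ∈ D) →
    ((∀ ha : a ∈ F,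
        ReachIn (reducedGraph X F) {z : ↥F | (z : V) ∉ D} ⟨a, ha⟩ ⟨y, hy⟩) ∧
     (a ∉ F → ∀ f, ∀ hf : f ∈ F, f ∈ D → ∀ c, c ∉ F → ReachIn X F a c → X.Adj f c →
        ReachIn (reducedGraph X F) {z : ↥F | (z : V) ∉ D} ⟨f, hf⟩ ⟨y, hy⟩)) := by
  intro a y w
  induction w with
  | nil =>
    intro hy hsupp
    constructor
    · intro _
      exact ReachIn.refl fun hnD => hnD (hsupp _ (Walk.start_mem_support _))
    · intro ha
      exact absurd hy ha
  | @cons a b y h p ih =>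
    intro hy hsupp
    have hsuppP : ∀ v ∈ p.support, v ∈ D := fun v hv => hsupp v (by simp [hv])
    have haD : a ∈ D := hsupp a (by simp)
    have hbD : b ∈ D := hsuppP b p.start_mem_support
    constructor
    · intro ha
      have hb : b ∉ F := fun hb => hss.f1 a ha b hb h
      exact (ih hy hsuppP).2 hb a ha haD b hb (ReachIn.refl hb) h
    · intro ha f hf hfD c hc hac hfc
      by_cases hb : b ∈ F
      · obtain ⟨E, hE, haE⟩ := exists_isCell (X := X) ha
        have hcE : c ∈ E := hE.mem_of_reachIn haE hc hac
        have hfE : f ∈ vBdry X E := ⟨fun hfE => hE.notMem hfE hf, c, hcE, hfc⟩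
        have hbE : (b : V) ∈ vBdry X E := ⟨fun hbE => hE.notMem hbE hb, a, haE, h.symm⟩
        by_cases hfb : f = b
        · subst hfb
          exact (ih hy hsuppP).1 hb
        · have hadj : (reducedGraph X F).Adj ⟨f, hf⟩ ⟨b, hb⟩ :=
            reducedGraph_adj.2 ⟨fun hEq => hfb (congrArg Subtype.val hEq), E, hE, hfE, hbE⟩
          exact (ReachIn.adj hadj (by simp [hfD]) (by simp [hbD])).trans
            ((ih hy hsuppP).1 hb)
      · exact (ih hy hsuppP).2 hb f hf hfD c hc
          ((ReachIn.adj h.symm hb ha).trans hac) hfc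

/-- Descending a walk in the reduced graph to reachability in `X`. -/
lemma reach_descend {B : Set V} (hB : B ⊆ F) :
    ∀ {u v : ↥F} (ω : (reducedGraph X F).Walk u v),
      (∀ z ∈ ω.support, z ∉ (Subtype.val ⁻¹' B : Set ↥F)) → ReachIn X B ↑u ↑v := by
  intro u v ω
  induction ω with
  | nil =>
    intro hω
    exact ReachIn.refl (hω _ (by simp))
  | @cons u b v h p ih =>
    intro hω
    obtain ⟨hne, E, hE, huE, hbE⟩ := reducedGraph_adj.1 h
    obtain ⟨huE', c₁, hc₁E, hadj₁⟩ := huE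
    obtain ⟨hbE', c₂, hc₂E, hadj₂⟩ := hbE
    have hu : (u : V) ∉ B := hω u (by simp)
    have hb : (b : V) ∉ B := hω b (by simp [Walk.support_cons, p.start_mem_support])
    have hc₁ : c₁ ∉ B := fun hc => hE.notMem hc₁E (hB hc)
    have hc₂ : c₂ ∉ B := fun hc => hE.notMem hc₂E (hB hc)
    refine (((ReachIn.adj hadj₁ hu hc₁).trans
      ((hE.reachIn hc₁E hc₂E).mono hB)).trans
      (ReachIn.adj hadj₂.symm hc₂ hb)).trans (ih ?_)
    intro z hz
    exact hω z (by simp [Walk.support_cons, hz])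

/-- The bridge lemma: a cell w.r.t. `B ⊆ F` meeting `F` corresponds to a cell
of the reduced graph, with matching boundary. -/
lemma bridge (hss : IsSelfSimilar X F ψ) {B D : Set V} (hB : B ⊆ F)
    (hD : IsCell X B D) (hgood : (D ∩ F).Nonempty) :
    IsCell (reducedGraph X F) (Subtype.val ⁻¹' B) (Subtype.val ⁻¹' D) ∧
    Subtype.val '' vBdry (reducedGraph X F) (Subtype.val ⁻¹' D) = vBdry X D := by
  obtain ⟨x₀, hx₀D, hx₀F⟩ := hgood
  have hDB : ∀ {d : V}, d ∈ D → d ∉ B := fun hd => hD.notMem hd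
  constructor
  · refine isCell_of_reachIn ⟨⟨x₀, hx₀F⟩, hx₀D⟩ (fun z hz hzB => hDB hz hzB) ?_
    rintro ⟨x, hxF⟩ hx y hy
    constructor
    · intro h
      have := reach_descend hB (Classical.choose h) (Classical.choose_spec h)
      exact hD.mem_of_reachIn hx hy this
    · intro hyD
      obtain ⟨w, hw⟩ := hD.reachIn hx hyD
      have hsupp : ∀ v ∈ w.support, v ∈ D := hD.support_subset hx w hw
      have := (walk_lift hss w y.2 hsupp).1 hxF
      refine this.mono ?_
      intro z hz
      exact fun hzD => hDB hzD hz
  · ext v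
    constructor
    · rintro ⟨z, ⟨hzD, b, hbD, hadj⟩, rfl⟩
      obtain ⟨hne, E, hE, hzE, hbE⟩ := reducedGraph_adj.1 hadj
      obtain ⟨hbE', c₂, hc₂E, hadj₂⟩ := hbE
      have hc₂D : c₂ ∈ D := hD.mem_of_reachIn hbD
        (fun hc => hE.notMem hc₂E (hB hc)) (ReachIn.adj hadj₂ (hDB hbD)
          (fun hc => hE.notMem hc₂E (hB hc)) |>.symm.symm)
      have hED : E ⊆ D := one_cell_subset hB hD hE hc₂D hc₂E
      obtain ⟨hzE', c₁, hc₁E, hadj₁⟩ := hzE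
      exact ⟨hzD, c₁, hED hc₁E, hadj₁⟩
    · rintro ⟨hvD, d, hdD, hadj⟩
      have hvB : v ∈ B := hD.bdry_subset ⟨hvD, d, hdD, hadj⟩
      have hvF : v ∈ F := hB hvB
      have hdF : d ∉ F := fun hdF => hss.f1 v hvF d hdF hadj
      obtain ⟨E, hE, hdE⟩ := exists_isCell (X := X) hdF
      have hED : E ⊆ D := one_cell_subset hB hD hE hdD hdE
      have hvE : v ∈ vBdry X E := ⟨fun hvE => hE.notMem hvE hvF, d, hdE, hadj⟩
      by_cases hEB : vBdry X E ⊆ B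
      · exfalso
        obtain ⟨w, hw⟩ := hD.reachIn hdD hx₀D
        have : x₀ ∈ E := walk_stay E hdE w
          (fun u hu hub => hw u hu (hEB hub)) x₀ w.end_mem_support
        exact hE.notMem this hx₀F
      · rw [Set.not_subset] at hEB
        obtain ⟨g, hgE, hgB⟩ := hEB
        have hgF : g ∈ F := hE.bdry_subset hgE
        obtain ⟨hgE', c, hcE, hadjg⟩ := hgE
        have hgD : g ∈ D := hD.mem_of_reachIn (hED hcE) hgB
          (ReachIn.adj hadjg.symm (fun hc => hE.notMem hcE (hB hc)) hgB)
        refine ⟨⟨v, hvF⟩, ⟨hvD, ⟨g, hgF⟩, hgD, ?_⟩, rfl⟩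
        refine reducedGraph_adj.2 ⟨fun hEq => ?_, E, hE, hvE, ⟨hgE', c, hcE, hadjg⟩⟩
        have h2 : v = g := congrArg Subtype.val hEq
        exact hgB (h2 ▸ hvB)

end Bridge

section Steps

variable {X : SimpleGraph V} {F : Set V} {ψ : X ≃g reducedGraph X F}

lemma preimage_val_Fiter (k : ℕ) :
    (Subtype.val ⁻¹' (Fiter X F ψ (k + 1)) : Set ↥F) = ⇑ψ '' Fiter X F ψ k := by
  ext z
  rw [mem_preimage, Fiter_succ]
  constructor
  · rintro ⟨a, ha, hav⟩
    exact ⟨a, ha, Subtype.ext hav⟩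
  · rintro ⟨a, ha, rfl⟩
    exact ⟨a, ha, rfl⟩

lemma val_image_psi (S : Set V) :
    Subtype.val '' (⇑ψ '' S) = psiMap X F ψ '' S := by
  rw [← Set.image_comp]; rfl

lemma iso_image_symm_image {W' : Type*} {Y : SimpleGraph W'} (e : X ≃g Y) (S : Set W') :
    ⇑e '' (⇑e.symm '' S) = S := by
  rw [← Set.image_comp]; ext v; simp

lemma step_good (hss : IsSelfSimilar X F ψ) {k : ℕ} (hk : 1 ≤ k) {D : Set V}
    (hD : IsCell X (Fiter X F ψ (k + 1)) D) (hgood : (D ∩ F).Nonempty) :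
    ∃ D', IsCell X (Fiter X F ψ k) D' ∧
      vBdry X D = psiMap X F ψ '' vBdry X D' ∧
      psiMap X F ψ '' D' = D ∩ F := by
  have hB : Fiter X F ψ (k + 1) ⊆ F := Fiter_subset_F (Nat.le_add_left 1 k)
  obtain ⟨hcell, hbd⟩ := bridge hss hB hD hgood
  rw [preimage_val_Fiter] at hcell
  set D' : Set V := ⇑ψ.symm '' (Subtype.val ⁻¹' D) with hD'def
  have himg : ⇑ψ '' D' = Subtype.val ⁻¹' D := iso_image_symm_image ψ _
  refine ⟨D', ?_, ?_, ?_⟩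
  · have := isCell_map ψ.symm hcell
    rwa [iso_symm_image_image] at this
  · calc vBdry X D = Subtype.val '' vBdry (reducedGraph X F) (Subtype.val ⁻¹' D) :=
          hbd.symm
      _ = Subtype.val '' vBdry (reducedGraph X F) (⇑ψ '' D') := by rw [himg]
      _ = Subtype.val '' (⇑ψ '' vBdry X D') := by rw [vBdry_map]
      _ = psiMap X F ψ '' vBdry X D' := val_image_psi _
  · rw [← val_image_psi, himg, Subtype.image_preimage_coe, Set.inter_comm]

lemma step_bad (hss : IsSelfSimilar X F ψ) {m : ℕ} (hm : 2 ≤ m) {D : Set V}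
    (hD : IsCell X (Fiter X F ψ m) D) (hbad : D ∩ F = ∅) :
    (vBdry X D).Subsingleton := by
  have hm1 : 1 ≤ m := le_trans (by norm_num) hm
  have hDF : D ⊆ Fᶜ := fun x hx hxF => by
    rw [Set.eq_empty_iff_forall_notMem] at hbad
    exact hbad x ⟨hx, hxF⟩
  have hcellF : IsCell X F D := by
    refine isCell_of_reachIn hD.nonempty hDF ?_
    intro x hx y hy
    constructor
    · intro h
      exact hD.mem_of_reachIn hx (fun hh => hy (Fiter_subset_F hm1 hh))
        (h.mono (Fiter_subset_F hm1))
    · intro hyD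
      obtain ⟨w, hw⟩ := hD.reachIn hx hyD
      exact ⟨w, fun v hv => hDF (hD.support_subset hx w hw v hv)⟩
  refine (bdry_inter_F2_subsingleton hss hcellF).anti ?_
  intro v hv
  exact ⟨hv, Fiter_le hm (hD.bdry_subset hv)⟩

lemma cell_closure_inter_subset {B C D : Set V} (hC : IsCell X B C) (hD : IsCell X B D)
    (hne : C ≠ D) :
    vClosure X C ∩ vClosure X D ⊆ vBdry X C ∩ vBdry X D := by
  rintro v ⟨hv1 | hv1, hv2 | hv2⟩
  · exact absurd (hC.eq_of_mem hD hv1 hv2) hne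
  · exact absurd (hD.bdry_subset hv2) (hC.notMem hv1)
  · exact absurd (hC.bdry_subset hv1) (hD.notMem hv2)
  · exact ⟨hv1, hv2⟩

lemma closures_subsingleton (hss : IsSelfSimilar X F ψ) (n : ℕ) (hn : 1 ≤ n) :
    ∀ C D : Set V, IsCell X (Fiter X F ψ n) C → IsCell X (Fiter X F ψ n) D → C ≠ D →
      (vClosure X C ∩ vClosure X D).Subsingleton := by
  induction n, hn using Nat.le_induction with
  | base =>
    intro C D hC hD hne
    rw [Fiter_one] at hC hD
    exact hss.f2 C D hC hD hne
  | succ n hn ih =>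
    intro C D hC hD hne
    rcases Set.eq_empty_or_nonempty (C ∩ F) with hCbad | hCgood
    · exact ((step_bad hss (by omega) hC hCbad).anti inter_subset_left).anti
        (cell_closure_inter_subset hC hD hne)
    rcases Set.eq_empty_or_nonempty (D ∩ F) with hDbad | hDgood
    · exact ((step_bad hss (by omega) hD hDbad).anti inter_subset_right).anti
        (cell_closure_inter_subset hC hD hne)
    obtain ⟨C', hC', hCbd, hCim⟩ := step_good hss hn hC hCgood
    obtain ⟨D', hD', hDbd, hDim⟩ := step_good hss hn hD hDgood
    have hne' : C' ≠ D' := by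
      rintro rfl
      obtain ⟨x, hxC, hxF⟩ := hCgood
      have : x ∈ D ∩ F := by rw [← hDim, hCim]; exact ⟨hxC, hxF⟩
      exact hne (hC.eq_of_mem hD hxC this.1)
    refine Set.Subsingleton.anti ?_ (cell_closure_inter_subset hC hD hne)
    rw [hCbd, hDbd, ← Set.image_inter psiMap_injective]
    refine Set.Subsingleton.image ?_ _
    exact (ih C' D' hC' hD' hne').anti
      (inter_subset_inter subset_union_right subset_union_right)

lemma bdry_inter_next_subsingleton (hss : IsSelfSimilar X F ψ) (m : ℕ) (hm : 1 ≤ m) :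
    ∀ C : Set V, IsCell X (Fiter X F ψ m) C →
      (vBdry X C ∩ Fiter X F ψ (m + 1)).Subsingleton := by
  induction m, hm using Nat.le_induction with
  | base =>
    intro C hC
    rw [Fiter_one] at hC
    exact bdry_inter_F2_subsingleton hss hC
  | succ m hm ih =>
    intro C hC
    rcases Set.eq_empty_or_nonempty (C ∩ F) with hbad | hgood
    · exact (step_bad hss (by omega) hC hbad).anti inter_subset_left
    obtain ⟨C', hC', hbd, _⟩ := step_good hss hm hC hgood
    rw [hbd, Fiter_succ (m + 1), ← Set.image_inter psiMap_injective]
    exact Set.Subsingleton.image (ih C' hC') _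

lemma main_aux (hss : IsSelfSimilar X F ψ) {m n : ℕ} (hm : 1 ≤ m) (hmn : m ≤ n)
    {C D : Set V} (hC : IsCell X (Fiter X F ψ m) C) (hD : IsCell X (Fiter X F ψ n) D)
    (hne : ¬ (m = n ∧ C = D)) : (vBdry X C ∩ vBdry X D).Subsingleton := by
  have hn : 1 ≤ n := hm.trans hmn
  rcases eq_or_lt_of_le hmn with rfl | hlt
  · have hCD : C ≠ D := fun h => hne ⟨rfl, h⟩
    exact (closures_subsingleton hss m hm C D hC hD hCD).anti
      (inter_subset_inter subset_union_right subset_union_right)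
  · obtain ⟨D₀, hD₀, hCD₀⟩ := exists_supercell hC (Fiter_le hmn)
    by_cases hD₀D : D₀ = D
    · subst hD₀D
      refine (bdry_inter_next_subsingleton hss m hm C hC).anti ?_
      rintro v ⟨hv1, hv2⟩
      exact ⟨hv1, Fiter_le hlt (hD.bdry_subset hv2)⟩
    · refine (closures_subsingleton hss n hn D₀ D hD₀ hD hD₀D).anti ?_
      rintro v ⟨hv1, hv2⟩
      exact ⟨vClosure_mono hCD₀ (Or.inr hv1), Or.inr hv2⟩

end Steps

/-- Lemma 2.2 (two cells): for an m-cell C and an n-cell D with (m,C) ≠ (n,D),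
the boundaries intersect in at most one vertex. -/
theorem twocells (X : SimpleGraph V) [X.LocallyFinite] (hconn : X.Connected)
    (hinf : Infinite V) (F : Set V) (ψ : X ≃g reducedGraph X F)
    (hss : IsSelfSimilar X F ψ) (m n : ℕ) (hm : 1 ≤ m) (hn : 1 ≤ n)
    (C D : Set V) (hC : IsCell X (Fiter X F ψ m) C) (hD : IsCell X (Fiter X F ψ n) D)
    (hne : ¬ (m = n ∧ C = D)) :
    (vBdry X C ∩ vBdry X D).Subsingleton := by
  rcases le_total m n with h | h
  · exact main_aux hss hm h hC hD hne
  · rw [Set.inter_comm]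
    exact main_aux hss hn h hD hC (fun ⟨h1, h2⟩ => hne ⟨h1.symm, h2.symm⟩)
end

section
/- Let X be self-similar with respect to F with isomorphism ψ: X → X_F and φ = ψ^{-1}. Then for all vertices x, y in F, the graph distance in X satisfies d_X(x,y) ≥ 2 · d_X(φx, φy). -/
open SimpleGraph Set

variable {V : Type*}

/-- Along a walk from a non-`F` vertex `b` to an `F`-vertex `y`, there is a first `F`-vertex
`z`, with predecessor `c ∉ F` reachable from `b` inside `Fᶜ`. -/
lemma first_F_vertex (X : SimpleGraph V) (F : Set V) :
    ∀ (b y : V) (p : X.Walk b y) (hb : b ∈ Fᶜ) (_ : y ∈ F),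
    ∃ (z : V) (_ : z ∈ F) (p₂ : X.Walk z y) (c : V) (hc : c ∈ Fᶜ),
      X.Adj c z ∧ (X.induce Fᶜ).Reachable ⟨b, hb⟩ ⟨c, hc⟩ ∧ p₂.length + 1 ≤ p.length := by
  intro b y p
  induction p with
  | nil => intro hb hy; exact absurd hy hb
  | @cons b c y hbc p'' ih =>
    intro hb hy
    by_cases hcF : c ∈ F
    · exact ⟨c, hcF, p'', b, hb, hbc, Reachable.refl _, by simp⟩
    · obtain ⟨z, hz, p₂, c', hc', hadj, hreach, hlen⟩ := ih hcF hy
      refine ⟨z, hz, p₂, c', hc', hadj, ?_, by simpa using Nat.le_succ_of_le hlen⟩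
      exact Reachable.trans (Adj.reachable (by simpa using hbc)) hreach

/-- Any walk in `X` between vertices of `F` projects to a walk in the reduced graph
of at most half the length. -/
lemma walk_reduce (X : SimpleGraph V) (F : Set V)
    (hF : ∀ x ∈ F, ∀ y ∈ F, ¬ X.Adj x y) :
    ∀ (n : ℕ) (a y : V) (p : X.Walk a y), p.length = n → ∀ (ha : a ∈ F) (hy : y ∈ F),
    ∃ q : (reducedGraph X F).Walk ⟨a, ha⟩ ⟨y, hy⟩, 2 * q.length ≤ p.length := by
  intro n
  induction n using Nat.strong_induction_on with
  | _ n IH =>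
    intro a y p hn ha hy
    cases p with
    | nil =>
      exact ⟨(SimpleGraph.Walk.nil' ⟨a, ha⟩).copy rfl (by simp), by simp⟩
    | @cons a b y hab p' =>
      have hbF : b ∈ Fᶜ := fun hbF => hF a ha b hbF hab
      obtain ⟨z, hz, p₂, c, hc, hadj, hreach, hlen⟩ :=
        first_F_vertex X F b y p' hbF hy
      -- the cell containing b (and c)
      set C : Set V :=
        Subtype.val '' ((X.induce Fᶜ).connectedComponentMk ⟨b, hbF⟩).supp with hC
      have hcell : IsCell X F C := ⟨⟨b, hbF⟩, rfl⟩
      have hbC : b ∈ C := ⟨⟨b, hbF⟩, by simp, rfl⟩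
      have hcC : c ∈ C :=
        ⟨⟨c, hc⟩, by simp [SimpleGraph.ConnectedComponent.mem_supp_iff,
          SimpleGraph.ConnectedComponent.eq, hreach.symm], rfl⟩
      have hnotC : ∀ v ∈ F, v ∉ C := by
        rintro v hv ⟨⟨w, hw⟩, _, rfl⟩; exact hw hv
      have haB : (a : V) ∈ vBdry X C := ⟨hnotC a ha, b, hbC, hab⟩
      have hzB : (z : V) ∈ vBdry X C := ⟨hnotC z hz, c, hcC, hadj.symm⟩
      -- induction on the remaining walk
      have hlt : p₂.length < n := by
        subst hn; simp only [SimpleGraph.Walk.length_cons]; omega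
      obtain ⟨q', hq'⟩ := IH p₂.length hlt z y p₂ rfl hz hy
      by_cases hazeq : a = z
      · subst hazeq
        refine ⟨q', ?_⟩
        subst hn
        simp only [SimpleGraph.Walk.length_cons]
        omega
      · have hadj' : (reducedGraph X F).Adj ⟨a, ha⟩ ⟨z, hz⟩ :=
          ⟨fun h => hazeq (congrArg Subtype.val h), C, hcell, haB, hzB⟩
        refine ⟨SimpleGraph.Walk.cons hadj' q', ?_⟩
        subst hn
        simp only [SimpleGraph.Walk.length_cons]
        omega

/-- For vertices x, y ∈ F one has d_X(x,y) ≥ 2·d_X(φx, φy), where φ = ψ⁻¹. -/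
theorem dist_contraction (X : SimpleGraph V) [X.LocallyFinite] (hconn : X.Connected)
    (hinf : Infinite V) (F : Set V) (ψ : X ≃g reducedGraph X F)
    (hss : IsSelfSimilar X F ψ) (x y : V) (hx : x ∈ F) (hy : y ∈ F) :
    X.dist x y ≥ 2 * X.dist (ψ.symm ⟨x, hx⟩) (ψ.symm ⟨y, hy⟩) := by
  obtain ⟨p, hp⟩ := hconn.exists_walk_length_eq_dist x y
  obtain ⟨q, hq⟩ := walk_reduce X F hss.f1 p.length x y p rfl hx hy
  have hmap : X.dist (ψ.symm ⟨x, hx⟩) (ψ.symm ⟨y, hy⟩) ≤ q.length := by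
    have := X.dist_le (q.map ψ.symm.toHom)
    simpa using this
  calc 2 * X.dist (ψ.symm ⟨x, hx⟩) (ψ.symm ⟨y, hy⟩) ≤ 2 * q.length := by omega
    _ ≤ p.length := hq
    _ = X.dist x y := hp
end
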